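/- On a probability space (Ω, P), let Z_1 and Z_2 be independent random variables each with standard normal law N(0,1). Given μ_1, μ_2 ∈ ℝ, σ_1 > 0, σ_2 > 0 and ρ ∈ (−1,1), define Y_1 = μ_1 + σ_1 Z_1 and Y_2 = μ_2 + ρ σ_2 Z_1 + σ_2 √(1−ρ²) Z_2. Then the conditional distribution of Y_2 given Y_1 satisfies, for (law of Y_1)-almost every y_1, condDistrib(Y_2 | Y_1)(y_1) = N(μ_2 + (σ_2/σ_1)ρ(y_1 − μ_1), (1 − ρ²)σ_2²); i.e. Y_2 | Y_1 = y_1 is normal with mean μ_2 + (σ_2/σ_1)ρ(y_1 − μ_1) and variance (1 − ρ²)σ_2². -/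

import Mathlib

open MeasureTheory ProbabilityTheory
open scoped ENNReal NNReal

lemma aux_gaussian_affine_map (b m : ℝ) :
    (gaussianReal 0 1).map (fun x => m + b * x) =
      gaussianReal m (⟨b ^ 2, sq_nonneg b⟩ * 1) := by
  have h : (fun x : ℝ => m + b * x) = (fun x => x + m) ∘ (fun x => b * x) := by
    ext x; simp [add_comm]
  rw [h, ← Measure.map_map (measurable_id'.add_const m) (measurable_const_mul b),
    gaussianReal_map_const_mul, gaussianReal_map_add_const]
  norm_num
  exact congrArg _ (mul_one _).symm

/-- For the bivariate normal pair `Y₁ = μ₁ + σ₁ Z₁`, `Y₂ = μ₂ + ρ σ₂ Z₁ + σ₂ √(1-ρ²) Z₂`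
built from independent standard normals, the conditional distribution of `Y₂` given
`Y₁ = y₁` is `N(μ₂ + (σ₂/σ₁) ρ (y₁ - μ₁), (1 - ρ²) σ₂²)` for a.e. `y₁`. -/
theorem bivariate_normal_condDistrib {Ω : Type*} [MeasurableSpace Ω]
    (P : Measure Ω) [IsProbabilityMeasure P]
    (Z₁ Z₂ : Ω → ℝ) (hZ₁ : Measurable Z₁) (hZ₂ : Measurable Z₂)
    (hindep : IndepFun Z₁ Z₂ P)
    (hlaw₁ : P.map Z₁ = gaussianReal 0 1) (hlaw₂ : P.map Z₂ = gaussianReal 0 1)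
    (μ₁ μ₂ σ₁ σ₂ ρ : ℝ) (hσ₁ : 0 < σ₁) (hσ₂ : 0 < σ₂) (hρ : ρ ∈ Set.Ioo (-1 : ℝ) 1) :
    ∀ᵐ y₁ ∂(P.map fun ω => μ₁ + σ₁ * Z₁ ω),
      condDistrib (fun ω => μ₂ + ρ * σ₂ * Z₁ ω + σ₂ * Real.sqrt (1 - ρ ^ 2) * Z₂ ω)
          (fun ω => μ₁ + σ₁ * Z₁ ω) P y₁ =
        gaussianReal (μ₂ + σ₂ / σ₁ * ρ * (y₁ - μ₁))
          (Real.toNNReal ((1 - ρ ^ 2) * σ₂ ^ 2)) := by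
  obtain ⟨hρ1, hρ2⟩ := hρ
  have h1ρ : (0:ℝ) < 1 - ρ ^ 2 := by nlinarith
  set b : ℝ := σ₂ * Real.sqrt (1 - ρ ^ 2) with hb_def
  set v : ℝ≥0 := Real.toNNReal ((1 - ρ ^ 2) * σ₂ ^ 2) with hv_def
  have hb2 : b ^ 2 = (1 - ρ ^ 2) * σ₂ ^ 2 := by
    rw [hb_def, mul_pow, Real.sq_sqrt h1ρ.le]; ring
  have hvv : (⟨b ^ 2, sq_nonneg b⟩ * 1 : ℝ≥0) = v := by
    refine (mul_one _).trans ?_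
    rw [hv_def]
    ext
    rw [Real.coe_toNNReal _ (by positivity)]
    exact hb2
  have hmapg : ∀ m : ℝ, (gaussianReal 0 1).map (fun x => m + b * x) = gaussianReal m v := by
    intro m; rw [aux_gaussian_affine_map, hvv]
  -- the candidate kernel
  have hκmeas : Measurable (fun y : ℝ => gaussianReal (μ₂ + σ₂ / σ₁ * ρ * (y - μ₁)) v) := by
    apply Measure.measurable_of_measurable_coe
    intro s hs
    have heq : ∀ y : ℝ, gaussianReal (μ₂ + σ₂ / σ₁ * ρ * (y - μ₁)) v s
        = ∫⁻ x, s.indicator (fun _ => (1:ℝ≥0∞)) ((μ₂ + σ₂ / σ₁ * ρ * (y - μ₁)) + b * x)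
            ∂(gaussianReal 0 1) := by
      intro y
      rw [← hmapg, Measure.map_apply (by fun_prop) hs,
        ← lintegral_indicator_one ((by fun_prop : Measurable
          fun x => (μ₂ + σ₂ / σ₁ * ρ * (y - μ₁)) + b * x) hs)]
      congr 1 with x
    simp_rw [heq]
    exact Measurable.lintegral_prod_right'
      (f := fun p : ℝ × ℝ => s.indicator (fun _ => (1:ℝ≥0∞))
        ((μ₂ + σ₂ / σ₁ * ρ * (p.1 - μ₁)) + b * p.2))
      ((measurable_const.indicator hs).comp (by fun_prop))
  set κ : Kernel ℝ ℝ := ⟨fun y => gaussianReal (μ₂ + σ₂ / σ₁ * ρ * (y - μ₁)) v, hκmeas⟩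
    with hκ_def
  have hκ_apply : ∀ y, κ y = gaussianReal (μ₂ + σ₂ / σ₁ * ρ * (y - μ₁)) v := fun _ => rfl
  haveI : IsMarkovKernel κ := ⟨fun y => by rw [hκ_apply]; infer_instance⟩
  have hY₁ : Measurable (fun ω => μ₁ + σ₁ * Z₁ ω) := by fun_prop
  have hY₂ : Measurable (fun ω => μ₂ + ρ * σ₂ * Z₁ ω + b * Z₂ ω) := by fun_prop
  have hmapZ : P.map (fun ω => (Z₁ ω, Z₂ ω)) = (gaussianReal 0 1).prod (gaussianReal 0 1) := by
    have h := (indepFun_iff_map_prod_eq_prod_map_map hZ₁.aemeasurable hZ₂.aemeasurable).mp hindep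
    rw [hlaw₁, hlaw₂] at h
    exact h
  set φ : ℝ → ℝ := fun z => μ₁ + σ₁ * z with hφ_def
  have hφ : Measurable φ := by fun_prop
  have hPY₁ : P.map (fun ω => μ₁ + σ₁ * Z₁ ω) = (gaussianReal 0 1).map φ := by
    have h : P.map (φ ∘ Z₁) = (P.map Z₁).map φ := (Measure.map_map hφ hZ₁).symm
    rw [hlaw₁] at h
    exact h
  set F : ℝ × ℝ → ℝ × ℝ := fun z => (μ₁ + σ₁ * z.1, μ₂ + ρ * σ₂ * z.1 + b * z.2) with hF_def
  have hF : Measurable F := by fun_prop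
  have hPY : P.map (fun ω => (μ₁ + σ₁ * Z₁ ω, μ₂ + ρ * σ₂ * Z₁ ω + b * Z₂ ω))
      = ((gaussianReal 0 1).prod (gaussianReal 0 1)).map F := by
    have h : P.map (F ∘ fun ω => (Z₁ ω, Z₂ ω)) = (P.map (fun ω => (Z₁ ω, Z₂ ω))).map F :=
      (Measure.map_map hF (hZ₁.prodMk hZ₂)).symm
    rw [hmapZ] at h
    exact h
  have hcomp : P.map (fun ω => ((fun ω => μ₁ + σ₁ * Z₁ ω) ω,
      (fun ω => μ₂ + ρ * σ₂ * Z₁ ω + b * Z₂ ω) ω))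
      = (P.map (fun ω => μ₁ + σ₁ * Z₁ ω)) ⊗ₘ κ := by
    rw [hPY, hPY₁]
    haveI : IsProbabilityMeasure (((gaussianReal 0 1).prod (gaussianReal 0 1)).map F) :=
      Measure.isProbabilityMeasure_map hF.aemeasurable
    haveI : IsProbabilityMeasure ((gaussianReal 0 1).map φ) :=
      Measure.isProbabilityMeasure_map hφ.aemeasurable
    refine MeasureTheory.ext_of_generate_finite _ generateFrom_prod.symm isPiSystem_prod ?_ ?_
    · rintro s ⟨s₁, hs₁, s₂, hs₂, rfl⟩
      replace hs₁ : MeasurableSet s₁ := hs₁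
      replace hs₂ : MeasurableSet s₂ := hs₂
      rw [Measure.map_apply hF (hs₁.prod hs₂), Measure.compProd_apply_prod hs₁ hs₂,
        Measure.prod_apply (hF (hs₁.prod hs₂)),
        setLIntegral_map hs₁ (κ.measurable_coe hs₂) hφ]
      have hslice : ∀ z₁ : ℝ, (gaussianReal 0 1) (Prod.mk z₁ ⁻¹' (F ⁻¹' (s₁ ×ˢ s₂)))
          = (φ ⁻¹' s₁).indicator (fun z₁ => κ (φ z₁) s₂) z₁ := by
        intro z₁
        by_cases h : φ z₁ ∈ s₁
        · have hset : Prod.mk z₁ ⁻¹' (F ⁻¹' (s₁ ×ˢ s₂))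
              = (fun z₂ => (μ₂ + ρ * σ₂ * z₁) + b * z₂) ⁻¹' s₂ := by
            ext z₂
            simp only [Set.mem_preimage, hF_def, Set.mem_prod]
            have h' : μ₁ + σ₁ * z₁ ∈ s₁ := h
            simp [h']
          rw [Set.indicator_of_mem (s := φ ⁻¹' s₁) h, hset, ← Measure.map_apply (by fun_prop) hs₂,
            hmapg, hκ_apply]
          congr 2
          simp only [hφ_def]
          field_simp
          ring
        · rw [Set.indicator_of_notMem (s := φ ⁻¹' s₁) h]
          have hset : Prod.mk z₁ ⁻¹' (F ⁻¹' (s₁ ×ˢ s₂)) = ∅ := by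
            ext z₂
            simp only [Set.mem_preimage, hF_def, Set.mem_prod, Set.mem_empty_iff_false,
              iff_false, not_and]
            intro hc
            exact absurd hc h
          rw [hset]
          simp
      rw [lintegral_congr hslice, lintegral_indicator (hφ hs₁)]
    · simp [measure_univ]
  filter_upwards [condDistrib_ae_eq_of_measure_eq_compProd_of_measurable hY₁ hY₂ (κ := κ) hcomp] with y hy
  rw [hy, hκ_apply]
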